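/- Define f(x) = T(x)^{-1} Λ x for x ∈ R^n with nonzero first component, where Λ = diag(0,1,...,n−1). If f(x_1) = f(x_2), then x_1 = α x_2 for some nonzero real α. -/

import Mathlib

open Matrix Finset

/-- Lower triangular Toeplitz matrix generated by a vector. -/
def LTT {n : ℕ} (x : Fin n → ℝ) : Matrix (Fin n) (Fin n) ℝ :=
  Matrix.of fun i j =>
    if h : (j : ℕ) ≤ (i : ℕ) then
      x ⟨(i : ℕ) - (j : ℕ), Nat.lt_of_le_of_lt (Nat.sub_le _ _) i.isLt⟩
    else 0

/-- The diagonal matrix diag(0,1,...,n-1). -/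
def Lam (n : ℕ) : Matrix (Fin n) (Fin n) ℝ :=
  Matrix.diagonal fun i => (i : ℝ)

lemma LTT_mulVec_inv {n : ℕ} (x : Fin (n + 1) → ℝ) (hx : x 0 ≠ 0)
    (v : Fin (n + 1) → ℝ) : LTT x *ᵥ ((LTT x)⁻¹ *ᵥ v) = v := by
  have ht : (LTT x).BlockTriangular OrderDual.toDual := by
    intro i j hij
    have hij' : (i : ℕ) < (j : ℕ) := by exact_mod_cast hij
    simp only [LTT, Matrix.of_apply]
    rw [dif_neg (Nat.not_le.mpr hij')]
  have hdiag : ∀ i : Fin (n + 1), LTT x i i = x 0 := by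
    intro i
    simp only [LTT, Matrix.of_apply, dif_pos (le_refl _), Nat.sub_self]
    congr 1
  have hdet : (LTT x).det = x 0 ^ (n + 1) := by
    rw [Matrix.det_of_lowerTriangular _ ht]
    simp [hdiag]
  have hu : IsUnit (LTT x).det := by
    rw [hdet]; exact isUnit_iff_ne_zero.mpr (pow_ne_zero _ hx)
  rw [Matrix.mulVec_mulVec, Matrix.mul_nonsing_inv _ hu, Matrix.one_mulVec]

theorem f_injective_up_to_scaling {n : ℕ} (x₁ x₂ : Fin (n + 1) → ℝ)
    (h₁ : x₁ 0 ≠ 0) (h₂ : x₂ 0 ≠ 0)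
    (hf : (LTT x₁)⁻¹ *ᵥ (Lam (n + 1) *ᵥ x₁) = (LTT x₂)⁻¹ *ᵥ (Lam (n + 1) *ᵥ x₂)) :
    ∃ α : ℝ, α ≠ 0 ∧ x₁ = α • x₂ := by
  set y := (LTT x₁)⁻¹ *ᵥ (Lam (n + 1) *ᵥ x₁) with hy
  have e₁ : LTT x₁ *ᵥ y = Lam (n + 1) *ᵥ x₁ := by
    rw [hy]; exact LTT_mulVec_inv x₁ h₁ _
  have e₂ : LTT x₂ *ᵥ y = Lam (n + 1) *ᵥ x₂ := by
    rw [hf]; exact LTT_mulVec_inv x₂ h₂ _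
  have hrec : ∀ x : Fin (n + 1) → ℝ, LTT x *ᵥ y = Lam (n + 1) *ᵥ x →
      ∀ i : Fin (n + 1), (i : ℝ) * x i =
        ∑ j : Fin (n + 1), (if h : (j : ℕ) ≤ (i : ℕ) then
          x ⟨(i : ℕ) - (j : ℕ), Nat.lt_of_le_of_lt (Nat.sub_le _ _) i.isLt⟩
          else 0) * y j := by
    intro x hx i
    have h := congrFun hx i
    rw [Lam, Matrix.mulVec_diagonal] at h
    exact h.symm
  have hy0 : y 0 = 0 := by
    have h0 := hrec x₁ e₁ 0
    rw [Finset.sum_eq_single 0] at h0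
    · simp only [Fin.val_zero, Nat.cast_zero, zero_mul, dif_pos (le_refl 0),
        Nat.sub_self] at h0
      have h0' : x₁ 0 * y 0 = 0 := by
        have : ((⟨0, Nat.succ_pos n⟩ : Fin (n+1))) = 0 := rfl
        simpa [this] using h0.symm
      rcases mul_eq_zero.mp h0' with h | h
      · exact absurd h h₁
      · exact h
    · intro j _ hj
      rw [dif_neg, zero_mul]
      exact fun hle => hj (Fin.ext (Nat.le_zero.mp hle))
    · simp
  have main : ∀ m : ℕ, ∀ hm : m < n + 1, x₂ 0 * x₁ ⟨m, hm⟩ = x₁ 0 * x₂ ⟨m, hm⟩ := by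
    intro m
    induction m using Nat.strong_induction_on with
    | _ m ih =>
      intro hm
      rcases Nat.eq_zero_or_pos m with rfl | hmpos
      · simp [mul_comm]
      · have H1 := hrec x₁ e₁ ⟨m, hm⟩
        have H2 := hrec x₂ e₂ ⟨m, hm⟩
        simp only [Fin.val_mk] at H1 H2
        have hsum : x₂ 0 * ((m : ℝ) * x₁ ⟨m, hm⟩)
            = x₁ 0 * ((m : ℝ) * x₂ ⟨m, hm⟩) := by
          have step : ∑ j : Fin (n + 1), x₂ 0 * ((if h : (j : ℕ) ≤ m then
              x₁ ⟨m - (j : ℕ), Nat.lt_of_le_of_lt (Nat.sub_le _ _) hm⟩ else 0) * y j)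
              = ∑ j : Fin (n + 1), x₁ 0 * ((if h : (j : ℕ) ≤ m then
              x₂ ⟨m - (j : ℕ), Nat.lt_of_le_of_lt (Nat.sub_le _ _) hm⟩ else 0) * y j) := by
            apply Finset.sum_congr rfl
            intro j _
            by_cases hj : (j : ℕ) ≤ m
            · rw [dif_pos hj, dif_pos hj]
              rcases Nat.eq_zero_or_pos (j : ℕ) with hj0 | hjpos
              · have : j = 0 := Fin.ext hj0
                rw [this, hy0]; ring
              · have hlt : m - (j : ℕ) < m := Nat.sub_lt hmpos hjpos
                have h5 := ih _ hlt (Nat.lt_of_le_of_lt (Nat.sub_le _ _) hm)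
                linear_combination y j * h5
            · rw [dif_neg hj, dif_neg hj]; ring
          calc x₂ 0 * ((m : ℝ) * x₁ ⟨m, hm⟩)
              = ∑ j : Fin (n + 1), x₂ 0 * ((if h : (j : ℕ) ≤ m then
                x₁ ⟨m - (j : ℕ), Nat.lt_of_le_of_lt (Nat.sub_le _ _) hm⟩ else 0) * y j) := by
                rw [H1, Finset.mul_sum]
            _ = ∑ j : Fin (n + 1), x₁ 0 * ((if h : (j : ℕ) ≤ m then
                x₂ ⟨m - (j : ℕ), Nat.lt_of_le_of_lt (Nat.sub_le _ _) hm⟩ else 0) * y j) := step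
            _ = x₁ 0 * ((m : ℝ) * x₂ ⟨m, hm⟩) := by
                rw [H2, Finset.mul_sum]
        have hmR : (m : ℝ) ≠ 0 := by exact_mod_cast hmpos.ne'
        apply mul_left_cancel₀ hmR
        linear_combination hsum
  refine ⟨x₁ 0 / x₂ 0, div_ne_zero h₁ h₂, ?_⟩
  funext i
  have := main i.val i.isLt
  rw [Fin.eta] at this
  have : x₂ 0 * x₁ i = x₁ 0 * x₂ i := this
  simp only [Pi.smul_apply, smul_eq_mul]
  field_simp
  linear_combination this
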